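/- arXiv:1402.1734 — 10 statements merged into one kernel-verified Lean document; each statement's English description precedes it below -/
import Mathlib

section
/- Let L be a nonempty finite type, u : L → ℝ, and w : L → ℝ with w(ℓ) > 0 for every ℓ. Then for every β ∈ ℝ, the derivative of the Gibbs mean m at β equals the Gibbs variance: m'(β) = ∑_{ℓ} p_β(ℓ)·u(ℓ)² − (∑_{ℓ} p_β(ℓ)·u(ℓ))². -/
/-- The derivative of the Gibbs mean equals the Gibbs variance. -/
theorem gibbsMean_hasDerivAt_gibbsVariance {L : Type*} [Fintype L] [Nonempty L]
    (u w : L → ℝ) (hw : ∀ ℓ, 0 < w ℓ) (β : ℝ) :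
    HasDerivAt (fun β : ℝ =>
        (∑ ℓ, w ℓ * u ℓ * Real.exp (β * u ℓ)) / (∑ ℓ, w ℓ * Real.exp (β * u ℓ)))
      ((∑ ℓ, (w ℓ * Real.exp (β * u ℓ) / ∑ ℓ', w ℓ' * Real.exp (β * u ℓ')) * (u ℓ) ^ 2)
        - (∑ ℓ, (w ℓ * Real.exp (β * u ℓ) / ∑ ℓ', w ℓ' * Real.exp (β * u ℓ')) * u ℓ) ^ 2)
      β := by
  have hZpos : 0 < ∑ ℓ, w ℓ * Real.exp (β * u ℓ) :=
    Finset.sum_pos (fun ℓ _ => mul_pos (hw ℓ) (Real.exp_pos _)) Finset.univ_nonempty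
  have hD : HasDerivAt (fun b : ℝ => ∑ ℓ, w ℓ * Real.exp (b * u ℓ))
      (∑ ℓ, w ℓ * u ℓ * Real.exp (β * u ℓ)) β := by
    have := HasDerivAt.fun_sum (u := Finset.univ) (fun ℓ _ =>
      (((hasDerivAt_mul_const (u ℓ)).exp).const_mul (w ℓ) : HasDerivAt
        (fun b : ℝ => w ℓ * Real.exp (b * u ℓ)) (w ℓ * (Real.exp (β * u ℓ) * u ℓ)) β))
    refine this.congr_deriv ?_
    apply Finset.sum_congr rfl; intro ℓ _; ring
  have hN : HasDerivAt (fun b : ℝ => ∑ ℓ, w ℓ * u ℓ * Real.exp (b * u ℓ))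
      (∑ ℓ, w ℓ * u ℓ ^ 2 * Real.exp (β * u ℓ)) β := by
    have := HasDerivAt.fun_sum (u := Finset.univ) (fun ℓ _ =>
      (((hasDerivAt_mul_const (u ℓ)).exp).const_mul (w ℓ * u ℓ) : HasDerivAt
        (fun b : ℝ => w ℓ * u ℓ * Real.exp (b * u ℓ)) (w ℓ * u ℓ * (Real.exp (β * u ℓ) * u ℓ)) β))
    refine this.congr_deriv ?_
    apply Finset.sum_congr rfl; intro ℓ _; ring
  have h := hN.fun_div hD hZpos.ne'
  refine h.congr_deriv ?_
  rw [show (∑ ℓ, (w ℓ * Real.exp (β * u ℓ) / ∑ ℓ', w ℓ' * Real.exp (β * u ℓ')) * (u ℓ) ^ 2)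
      = (∑ ℓ, w ℓ * u ℓ ^ 2 * Real.exp (β * u ℓ)) / (∑ ℓ', w ℓ' * Real.exp (β * u ℓ')) by
    rw [Finset.sum_div]; apply Finset.sum_congr rfl; intro ℓ _; ring,
    show (∑ ℓ, (w ℓ * Real.exp (β * u ℓ) / ∑ ℓ', w ℓ' * Real.exp (β * u ℓ')) * u ℓ)
      = (∑ ℓ, w ℓ * u ℓ * Real.exp (β * u ℓ)) / (∑ ℓ', w ℓ' * Real.exp (β * u ℓ')) by
    rw [Finset.sum_div]; apply Finset.sum_congr rfl; intro ℓ _; ring]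
  field_simp
  simp only [fun x => mul_comm (u x) β]
  ring
end

section
/- (Proposition 1, prior case.) Let S and L be nonempty finite types, U : S → L → ℝ, and x : S → L. Define f_prior(β) = ∑_{s ∈ S} [U(s)(x(s)) − (∑_{ℓ} U(s)(ℓ)·exp(β·U(s)(ℓ))) / (∑_{ℓ} exp(β·U(s)(ℓ)))]. Then for every β ∈ ℝ, the derivative of f_prior at β equals −∑_{s ∈ S} [∑_{ℓ} q_{s,β}(ℓ)·U(s)(ℓ)² − (∑_{ℓ} q_{s,β}(ℓ)·U(s)(ℓ))²], where q_{s,β}(ℓ) = exp(β·U(s)(ℓ)) / ∑_{ℓ'} exp(β·U(s)(ℓ')); i.e., f_prior'(β) is minus the sum over sites of the conditional variances of U_s(X_s) given X_{∂s}. -/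
/-- Proposition 1, prior case: the derivative of the prior pseudolikelihood score
function is minus the sum over sites of the conditional variances. -/
theorem fprior_hasDerivAt_neg_sum_variances
    {S L : Type*} [Fintype S] [Nonempty S] [Fintype L] [Nonempty L]
    (U : S → L → ℝ) (x : S → L) (β : ℝ) :
    HasDerivAt (fun β : ℝ => ∑ s, (U s (x s) -
        (∑ ℓ, U s ℓ * Real.exp (β * U s ℓ)) / (∑ ℓ, Real.exp (β * U s ℓ))))
      (-∑ s, ((∑ ℓ, (Real.exp (β * U s ℓ) / ∑ ℓ', Real.exp (β * U s ℓ')) * (U s ℓ) ^ 2)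
        - (∑ ℓ, (Real.exp (β * U s ℓ) / ∑ ℓ', Real.exp (β * U s ℓ')) * U s ℓ) ^ 2))
      β := by
  rw [← Finset.sum_neg_distrib]
  apply HasDerivAt.fun_sum
  intro s _
  set N : ℝ → ℝ := fun b => ∑ ℓ, U s ℓ * Real.exp (b * U s ℓ) with hNdef
  set D : ℝ → ℝ := fun b => ∑ ℓ, Real.exp (b * U s ℓ) with hDdef
  have hDpos : 0 < D β := Finset.sum_pos (fun ℓ _ => Real.exp_pos _) Finset.univ_nonempty
  have hDne : D β ≠ 0 := ne_of_gt hDpos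
  have hN : HasDerivAt N (∑ ℓ, U s ℓ * (U s ℓ * Real.exp (β * U s ℓ))) β := by
    apply HasDerivAt.fun_sum
    intro ℓ _
    exact ((Real.hasDerivAt_exp (β * U s ℓ)).comp β
      ((hasDerivAt_id β).mul_const (U s ℓ))).const_mul (U s ℓ) |>.congr_deriv (by ring : _ = U s ℓ * (U s ℓ * Real.exp (β * U s ℓ)))
  have hD : HasDerivAt D (N β) β := by
    rw [hNdef]
    apply HasDerivAt.fun_sum
    intro ℓ _
    exact ((Real.hasDerivAt_exp (β * U s ℓ)).comp β
      ((hasDerivAt_id β).mul_const (U s ℓ))).congr_deriv (by ring : _ = U s ℓ * Real.exp (β * U s ℓ))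
  have h := ((hasDerivAt_const β (U s (x s))).sub (hN.div hD hDne))
  convert h using 1
  case e'_8 => rfl
  have h1 : (∑ ℓ, (Real.exp (β * U s ℓ) / ∑ ℓ', Real.exp (β * U s ℓ')) * (U s ℓ) ^ 2)
      = (∑ ℓ, U s ℓ * (U s ℓ * Real.exp (β * U s ℓ))) / D β := by
    rw [Finset.sum_div]
    exact Finset.sum_congr rfl (fun ℓ _ => by rw [hDdef]; ring)
  have h2 : (∑ ℓ, (Real.exp (β * U s ℓ) / ∑ ℓ', Real.exp (β * U s ℓ')) * U s ℓ)
      = N β / D β := by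
    rw [hNdef, Finset.sum_div]
    exact Finset.sum_congr rfl (fun ℓ _ => by rw [hDdef]; ring)
  rw [h1, h2]
  field_simp
  simp_rw [mul_comm (U s _) β]
  ring
end

section
/- (Proposition 1, posterior case.) Let S and L be nonempty finite types, U : S → L → ℝ, x : S → L, and w : S → L → ℝ with w(s)(ℓ) > 0 for all s, ℓ. Define f_post(β) = ∑_{s ∈ S} [U(s)(x(s)) − (∑_{ℓ} w(s)(ℓ)·U(s)(ℓ)·exp(β·U(s)(ℓ))) / (∑_{ℓ} w(s)(ℓ)·exp(β·U(s)(ℓ)))]. Then for every β ∈ ℝ, the derivative of f_post at β equals −∑_{s ∈ S} [∑_{ℓ} p_{s,β}(ℓ)·U(s)(ℓ)² − (∑_{ℓ} p_{s,β}(ℓ)·U(s)(ℓ))²], where p_{s,β}(ℓ) = w(s)(ℓ)·exp(β·U(s)(ℓ)) / ∑_{ℓ'} w(s)(ℓ')·exp(β·U(s)(ℓ')); i.e., f_post'(β) is minus the sum over sites of the conditional variances of U_s(X_s) given (X_{∂s}, I_s). -/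
/-- Proposition 1, posterior case: the derivative of the posterior pseudolikelihood
score function is minus the sum over sites of the conditional variances. -/
theorem fpost_hasDerivAt_neg_sum_variances
    {S L : Type*} [Fintype S] [Nonempty S] [Fintype L] [Nonempty L]
    (U : S → L → ℝ) (x : S → L) (w : S → L → ℝ) (hw : ∀ s ℓ, 0 < w s ℓ) (β : ℝ) :
    HasDerivAt (fun β : ℝ => ∑ s, (U s (x s) -
        (∑ ℓ, w s ℓ * U s ℓ * Real.exp (β * U s ℓ)) /
          (∑ ℓ, w s ℓ * Real.exp (β * U s ℓ))))
      (-∑ s, ((∑ ℓ, (w s ℓ * Real.exp (β * U s ℓ) /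
            ∑ ℓ', w s ℓ' * Real.exp (β * U s ℓ')) * (U s ℓ) ^ 2)
        - (∑ ℓ, (w s ℓ * Real.exp (β * U s ℓ) /
            ∑ ℓ', w s ℓ' * Real.exp (β * U s ℓ')) * U s ℓ) ^ 2))
      β := by
  have hneg : (-∑ s, ((∑ ℓ, (w s ℓ * Real.exp (β * U s ℓ) /
            ∑ ℓ', w s ℓ' * Real.exp (β * U s ℓ')) * (U s ℓ) ^ 2)
        - (∑ ℓ, (w s ℓ * Real.exp (β * U s ℓ) /
            ∑ ℓ', w s ℓ' * Real.exp (β * U s ℓ')) * U s ℓ) ^ 2))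
      = ∑ s : S, (-((∑ ℓ, (w s ℓ * Real.exp (β * U s ℓ) /
            ∑ ℓ', w s ℓ' * Real.exp (β * U s ℓ')) * (U s ℓ) ^ 2)
        - (∑ ℓ, (w s ℓ * Real.exp (β * U s ℓ) /
            ∑ ℓ', w s ℓ' * Real.exp (β * U s ℓ')) * U s ℓ) ^ 2)) := by
    rw [← Finset.sum_neg_distrib]
  rw [hneg]
  apply HasDerivAt.fun_sum
  intro s _
  set D : ℝ → ℝ := fun β => ∑ ℓ, w s ℓ * Real.exp (β * U s ℓ) with hD
  set N : ℝ → ℝ := fun β => ∑ ℓ, w s ℓ * U s ℓ * Real.exp (β * U s ℓ) with hN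
  have hDpos : ∀ b : ℝ, 0 < D b := fun b =>
    Finset.sum_pos (fun ℓ _ => mul_pos (hw s ℓ) (Real.exp_pos _)) Finset.univ_nonempty
  have hDd : HasDerivAt D (N β) β := by
    apply HasDerivAt.fun_sum
    intro ℓ _
    have := (((hasDerivAt_id β).mul_const (U s ℓ)).exp).const_mul (w s ℓ)
    simpa [mul_comm, mul_assoc, mul_left_comm] using this
  set N' : ℝ := ∑ ℓ, w s ℓ * U s ℓ * U s ℓ * Real.exp (β * U s ℓ) with hN'
  have hNd : HasDerivAt N N' β := by
    apply HasDerivAt.fun_sum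
    intro ℓ _
    have := (((hasDerivAt_id β).mul_const (U s ℓ)).exp).const_mul (w s ℓ * U s ℓ)
    simpa [mul_comm, mul_assoc, mul_left_comm] using this
  have hdiv : HasDerivAt (fun b => N b / D b)
      ((N' * D β - N β * N β) / (D β) ^ 2) β :=
    hNd.div hDd (ne_of_gt (hDpos β))
  have hmain : HasDerivAt (fun b : ℝ => U s (x s) - N b / D b)
      (-((N' * D β - N β * N β) / (D β) ^ 2)) β :=
    hdiv.const_sub (U s (x s))
  refine hmain.congr_deriv ?_
  have hDne : D β ≠ 0 := ne_of_gt (hDpos β)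
  congr 1
  have h1 : (∑ ℓ, (w s ℓ * Real.exp (β * U s ℓ) / D β) * (U s ℓ) ^ 2) = N' / D β := by
    rw [hN', Finset.sum_div]
    apply Finset.sum_congr rfl
    intro ℓ _
    ring
  have h2 : (∑ ℓ, (w s ℓ * Real.exp (β * U s ℓ) / D β) * U s ℓ) = N β / D β := by
    rw [hN, Finset.sum_div]
    apply Finset.sum_congr rfl
    intro ℓ _
    ring
  rw [h1, h2]
  field_simp
end

section
/- Let L be a nonempty finite type, u : L → ℝ, and w : L → ℝ with w(ℓ) > 0 for every ℓ. If u is not constant (there exist ℓ, ℓ' ∈ L with u(ℓ) ≠ u(ℓ')), then the Gibbs mean β ↦ m(β) = (∑_{ℓ} w(ℓ)·u(ℓ)·exp(β·u(ℓ))) / (∑_{ℓ} w(ℓ)·exp(β·u(ℓ))) is strictly increasing on ℝ. -/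
open Real Finset

private lemma gibbs_key_nonneg (β₁ β₂ a b : ℝ) (h : β₁ < β₂) :
    0 ≤ (a - b) * (Real.exp (β₂ * a) * Real.exp (β₁ * b)
        - Real.exp (β₁ * a) * Real.exp (β₂ * b)) := by
  rcases lt_trichotomy a b with hab | hab | hab
  · have h1 : β₂ * a + β₁ * b < β₁ * a + β₂ * b := by nlinarith
    have h2 := Real.exp_lt_exp.2 h1
    rw [Real.exp_add, Real.exp_add] at h2
    nlinarith
  · simp [hab]
  · have h1 : β₁ * a + β₂ * b < β₂ * a + β₁ * b := by nlinarith
    have h2 := Real.exp_lt_exp.2 h1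
    rw [Real.exp_add, Real.exp_add] at h2
    nlinarith

private lemma gibbs_key_pos (β₁ β₂ a b : ℝ) (h : β₁ < β₂) (hab : a ≠ b) :
    0 < (a - b) * (Real.exp (β₂ * a) * Real.exp (β₁ * b)
        - Real.exp (β₁ * a) * Real.exp (β₂ * b)) := by
  rcases lt_or_gt_of_ne hab with hab | hab
  · have h1 : β₂ * a + β₁ * b < β₁ * a + β₂ * b := by nlinarith
    have h2 := Real.exp_lt_exp.2 h1
    rw [Real.exp_add, Real.exp_add] at h2
    nlinarith
  · have h1 : β₁ * a + β₂ * b < β₂ * a + β₁ * b := by nlinarith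
    have h2 := Real.exp_lt_exp.2 h1
    rw [Real.exp_add, Real.exp_add] at h2
    nlinarith

/-- If u is not constant, the Gibbs mean is strictly increasing in β. -/
theorem gibbsMean_strictMono {L : Type*} [Fintype L] [Nonempty L]
    (u w : L → ℝ) (hw : ∀ ℓ, 0 < w ℓ)
    (hu : ∃ ℓ ℓ' : L, u ℓ ≠ u ℓ') :
    StrictMono (fun β : ℝ =>
      (∑ ℓ, w ℓ * u ℓ * Real.exp (β * u ℓ)) / (∑ ℓ, w ℓ * Real.exp (β * u ℓ))) := by
  intro β₁ β₂ hβ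
  dsimp only
  have hD : ∀ β : ℝ, 0 < ∑ ℓ, w ℓ * Real.exp (β * u ℓ) := fun β =>
    Finset.sum_pos (fun ℓ _ => mul_pos (hw ℓ) (Real.exp_pos _)) Finset.univ_nonempty
  rw [div_lt_div_iff₀ (hD β₁) (hD β₂)]
  set E₁ : L → ℝ := fun ℓ => Real.exp (β₁ * u ℓ) with hE₁
  set E₂ : L → ℝ := fun ℓ => Real.exp (β₂ * u ℓ) with hE₂
  set t : L → L → ℝ := fun ℓ ℓ' =>
    w ℓ * w ℓ' * (u ℓ - u ℓ') * (E₂ ℓ * E₁ ℓ' - E₁ ℓ * E₂ ℓ') with ht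
  have hS : ∑ ℓ, ∑ ℓ', t ℓ ℓ' =
      2 * ((∑ ℓ, w ℓ * u ℓ * E₂ ℓ) * (∑ ℓ, w ℓ * E₁ ℓ)
        - (∑ ℓ, w ℓ * u ℓ * E₁ ℓ) * (∑ ℓ, w ℓ * E₂ ℓ)) := by
    have expand : ∀ ℓ ℓ' : L, t ℓ ℓ' =
        (w ℓ * u ℓ * E₂ ℓ) * (w ℓ' * E₁ ℓ')
        - (w ℓ * u ℓ * E₁ ℓ) * (w ℓ' * E₂ ℓ')
        - (w ℓ * E₂ ℓ) * (w ℓ' * u ℓ' * E₁ ℓ')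
        + (w ℓ * E₁ ℓ) * (w ℓ' * u ℓ' * E₂ ℓ') := by
      intro ℓ ℓ'; simp only [ht]; ring
    simp only [expand, Finset.sum_add_distrib, Finset.sum_sub_distrib]
    rw [Finset.sum_comm (f := fun ℓ ℓ' => (w ℓ * E₂ ℓ) * (w ℓ' * u ℓ' * E₁ ℓ')),
        Finset.sum_comm (f := fun ℓ ℓ' => (w ℓ * E₁ ℓ) * (w ℓ' * u ℓ' * E₂ ℓ'))]
    simp only [← Finset.sum_mul, ← Finset.mul_sum]
    ring
  have hpos : 0 < ∑ ℓ, ∑ ℓ', t ℓ ℓ' := by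
    obtain ⟨ℓ₀, ℓ₀', h0⟩ := hu
    have hnn : ∀ ℓ ℓ' : L, 0 ≤ t ℓ ℓ' := by
      intro ℓ ℓ'
      have h1 := gibbs_key_nonneg β₁ β₂ (u ℓ) (u ℓ') hβ
      have h2 : t ℓ ℓ' = (w ℓ * w ℓ') * ((u ℓ - u ℓ') *
          (Real.exp (β₂ * u ℓ) * Real.exp (β₁ * u ℓ')
            - Real.exp (β₁ * u ℓ) * Real.exp (β₂ * u ℓ'))) := by
        simp only [ht, hE₁, hE₂]; ring
      rw [h2]
      exact mul_nonneg (mul_nonneg (hw ℓ).le (hw ℓ').le) h1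
    have hst : 0 < t ℓ₀ ℓ₀' := by
      have h1 := gibbs_key_pos β₁ β₂ (u ℓ₀) (u ℓ₀') hβ h0
      have h2 : t ℓ₀ ℓ₀' = (w ℓ₀ * w ℓ₀') * ((u ℓ₀ - u ℓ₀') *
          (Real.exp (β₂ * u ℓ₀) * Real.exp (β₁ * u ℓ₀')
            - Real.exp (β₁ * u ℓ₀) * Real.exp (β₂ * u ℓ₀'))) := by
        simp only [ht, hE₁, hE₂]; ring
      rw [h2]
      exact mul_pos (mul_pos (hw ℓ₀) (hw ℓ₀')) h1
    exact Finset.sum_pos'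
      (fun ℓ _ => Finset.sum_nonneg fun ℓ' _ => hnn ℓ ℓ')
      ⟨ℓ₀, Finset.mem_univ _, Finset.sum_pos'
        (fun ℓ' _ => hnn ℓ₀ ℓ') ⟨ℓ₀', Finset.mem_univ _, hst⟩⟩
  rw [hS] at hpos
  linarith
end

section
/- Let L be a nonempty finite type, u : L → ℝ, and w : L → ℝ with w(ℓ) > 0 for every ℓ. Then the Gibbs mean m(β) = (∑_{ℓ} w(ℓ)·u(ℓ)·exp(β·u(ℓ))) / (∑_{ℓ} w(ℓ)·exp(β·u(ℓ))) tends to min_{ℓ ∈ L} u(ℓ) as β → −∞. -/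
open Filter Real Finset

/-- The Gibbs mean tends to the minimum of u as β → −∞. -/
theorem gibbsMean_tendsto_atBot_min {L : Type*} [Fintype L] [Nonempty L]
    (u w : L → ℝ) (hw : ∀ ℓ, 0 < w ℓ) :
    Filter.Tendsto
      (fun β : ℝ =>
        (∑ ℓ, w ℓ * u ℓ * Real.exp (β * u ℓ)) / (∑ ℓ, w ℓ * Real.exp (β * u ℓ)))
      Filter.atBot (nhds (Finset.univ.inf' Finset.univ_nonempty u)) := by
  set m := Finset.univ.inf' Finset.univ_nonempty u with hm
  have hle : ∀ ℓ : L, m ≤ u ℓ := fun ℓ => Finset.inf'_le _ (Finset.mem_univ ℓ)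
  -- pointwise limit of the exponential factors
  have hterm : ∀ ℓ : L, Tendsto (fun β : ℝ => Real.exp (β * (u ℓ - m)))
      atBot (nhds (if u ℓ = m then 1 else 0)) := by
    intro ℓ
    by_cases h : u ℓ = m
    · simp only [h, if_true, mul_zero]
      simpa using tendsto_const_nhds (f := atBot (α := ℝ)) (a := (1 : ℝ))
    · have hlt : 0 < u ℓ - m := sub_pos.mpr (lt_of_le_of_ne (hle ℓ) (Ne.symm h))
      have h1 : Tendsto (fun β : ℝ => β * (u ℓ - m)) atBot atBot :=
        tendsto_id.atBot_mul_const hlt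
      simp only [h, if_false]
      exact Real.tendsto_exp_atBot.comp h1
  set S : ℝ := ∑ ℓ, w ℓ * (if u ℓ = m then 1 else 0) with hS
  have hSpos : 0 < S := by
    obtain ⟨ℓ0, _, hℓ0⟩ := Finset.exists_mem_eq_inf' (Finset.univ_nonempty) u
    refine Finset.sum_pos' (fun ℓ _ => ?_) ⟨ℓ0, Finset.mem_univ ℓ0, ?_⟩
    · by_cases h : u ℓ = m <;> simp [h, (hw ℓ).le]
    · simp [← hℓ0, ← hm, (hw ℓ0)]
  have hnum : Tendsto (fun β : ℝ => ∑ ℓ, w ℓ * u ℓ * Real.exp (β * (u ℓ - m)))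
      atBot (nhds (m * S)) := by
    have : (m * S) = ∑ ℓ, w ℓ * u ℓ * (if u ℓ = m then 1 else 0) := by
      rw [hS, Finset.mul_sum]
      refine Finset.sum_congr rfl fun ℓ _ => ?_
      by_cases h : u ℓ = m <;> simp [h] <;> ring
    rw [this]
    exact tendsto_finset_sum _ fun ℓ _ => (tendsto_const_nhds.mul (hterm ℓ))
  have hden : Tendsto (fun β : ℝ => ∑ ℓ, w ℓ * Real.exp (β * (u ℓ - m)))
      atBot (nhds S) :=
    tendsto_finset_sum _ fun ℓ _ => (tendsto_const_nhds.mul (hterm ℓ))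
  have hdiv := hnum.div hden hSpos.ne'
  have heq : ∀ β : ℝ,
      (∑ ℓ, w ℓ * u ℓ * Real.exp (β * u ℓ)) / (∑ ℓ, w ℓ * Real.exp (β * u ℓ))
      = (∑ ℓ, w ℓ * u ℓ * Real.exp (β * (u ℓ - m)))
        / (∑ ℓ, w ℓ * Real.exp (β * (u ℓ - m))) := by
    intro β
    have h1 : ∀ ℓ : L, Real.exp (β * u ℓ) = Real.exp (β * m) * Real.exp (β * (u ℓ - m)) := by
      intro ℓ
      rw [← Real.exp_add]
      ring_nf
    have hnum' : (∑ ℓ, w ℓ * u ℓ * Real.exp (β * u ℓ))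
        = Real.exp (β * m) * ∑ ℓ, w ℓ * u ℓ * Real.exp (β * (u ℓ - m)) := by
      rw [Finset.mul_sum]; refine Finset.sum_congr rfl fun ℓ _ => ?_
      rw [h1 ℓ]; ring
    have hden' : (∑ ℓ, w ℓ * Real.exp (β * u ℓ))
        = Real.exp (β * m) * ∑ ℓ, w ℓ * Real.exp (β * (u ℓ - m)) := by
      rw [Finset.mul_sum]; refine Finset.sum_congr rfl fun ℓ _ => ?_
      rw [h1 ℓ]; ring
    rw [hnum', hden', mul_div_mul_left _ _ (Real.exp_ne_zero _)]
  have : m * S / S = m := by field_simp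
  rw [← this]
  exact hdiv.congr fun β => (heq β).symm
end

section
/- Let S and L be nonempty finite types, U : S → L → ℝ, x : S → L, and w : S → L → ℝ with w(s)(ℓ) > 0 for all s, ℓ. Define f(β) = ∑_{s ∈ S} [U(s)(x(s)) − (∑_{ℓ} w(s)(ℓ)·U(s)(ℓ)·exp(β·U(s)(ℓ))) / (∑_{ℓ} w(s)(ℓ)·exp(β·U(s)(ℓ)))]. Then f(β) tends to ∑_{s ∈ S} (U(s)(x(s)) − min_{ℓ ∈ L} U(s)(ℓ)) as β → −∞. -/
open Filter Finset

lemma exp_term_tendsto_aux (a : ℝ) (h : 0 ≤ a) :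
    Tendsto (fun β : ℝ => Real.exp (β * a)) atBot
      (nhds (if a = 0 then 1 else 0)) := by
  rcases eq_or_lt_of_le h with h0 | h0
  · simp [← h0]
  · rw [if_neg (ne_of_gt h0)]
    have hb : Tendsto (fun β : ℝ => β * a) atBot atBot :=
      Tendsto.atBot_mul_const h0 tendsto_id
    exact Real.tendsto_exp_atBot.comp hb

lemma ratio_tendsto_aux {L : Type*} [Fintype L] [Nonempty L] (u w : L → ℝ)
    (hw : ∀ ℓ, 0 < w ℓ) :
    Tendsto (fun β : ℝ => (∑ ℓ, w ℓ * u ℓ * Real.exp (β * u ℓ)) /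
        (∑ ℓ, w ℓ * Real.exp (β * u ℓ))) atBot
      (nhds (Finset.univ.inf' Finset.univ_nonempty u)) := by
  set m := Finset.univ.inf' Finset.univ_nonempty u with hm
  have hle : ∀ ℓ, m ≤ u ℓ := fun ℓ => Finset.inf'_le u (Finset.mem_univ ℓ)
  set c : L → ℝ := fun ℓ => if u ℓ - m = 0 then 1 else 0 with hc
  have key : ∀ β : ℝ, (∑ ℓ, w ℓ * u ℓ * Real.exp (β * u ℓ)) /
      (∑ ℓ, w ℓ * Real.exp (β * u ℓ)) =
      (∑ ℓ, w ℓ * u ℓ * Real.exp (β * (u ℓ - m))) /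
      (∑ ℓ, w ℓ * Real.exp (β * (u ℓ - m))) := by
    intro β
    have h1 : ∀ ℓ : L, Real.exp (β * u ℓ) =
        Real.exp (β * (u ℓ - m)) * Real.exp (β * m) := by
      intro ℓ; rw [← Real.exp_add]; ring_nf
    calc (∑ ℓ, w ℓ * u ℓ * Real.exp (β * u ℓ)) / (∑ ℓ, w ℓ * Real.exp (β * u ℓ))
        = ((∑ ℓ, w ℓ * u ℓ * Real.exp (β * (u ℓ - m))) * Real.exp (β * m)) /
          ((∑ ℓ, w ℓ * Real.exp (β * (u ℓ - m))) * Real.exp (β * m)) := by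
          rw [Finset.sum_mul, Finset.sum_mul]
          congr 1 <;> exact Finset.sum_congr rfl fun ℓ _ => by rw [h1 ℓ]; ring
      _ = _ := mul_div_mul_right _ _ (Real.exp_ne_zero _)
  have hnum : Tendsto (fun β : ℝ => ∑ ℓ, w ℓ * u ℓ * Real.exp (β * (u ℓ - m))) atBot
      (nhds (∑ ℓ, w ℓ * u ℓ * c ℓ)) := by
    refine tendsto_finset_sum _ fun ℓ _ => ?_
    exact (exp_term_tendsto_aux _ (sub_nonneg.mpr (hle ℓ))).const_mul _
  have hden : Tendsto (fun β : ℝ => ∑ ℓ, w ℓ * Real.exp (β * (u ℓ - m))) atBot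
      (nhds (∑ ℓ, w ℓ * c ℓ)) := by
    refine tendsto_finset_sum _ fun ℓ _ => ?_
    exact (exp_term_tendsto_aux _ (sub_nonneg.mpr (hle ℓ))).const_mul _
  obtain ⟨ℓ0, _, hℓ0⟩ := Finset.exists_mem_eq_inf' (Finset.univ_nonempty (α := L)) u
  have hDpos : 0 < ∑ ℓ, w ℓ * c ℓ := by
    refine Finset.sum_pos' (fun ℓ _ => ?_) ⟨ℓ0, Finset.mem_univ ℓ0, ?_⟩
    · rcases eq_or_ne (u ℓ - m) 0 with h | h <;>
        simp [hc, h, le_of_lt (hw ℓ)]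
    · have : u ℓ0 - m = 0 := by rw [hm, hℓ0]; ring
      simp [hc, this, hw ℓ0]
  have hN : (∑ ℓ, w ℓ * u ℓ * c ℓ) = m * ∑ ℓ, w ℓ * c ℓ := by
    rw [Finset.mul_sum]
    refine Finset.sum_congr rfl fun ℓ _ => ?_
    rcases eq_or_ne (u ℓ - m) 0 with h | h
    · have : u ℓ = m := by linarith [sub_eq_zero.mp h]
      simp [hc, h, this]; ring
    · simp [hc, h]
  have := hnum.div hden (ne_of_gt hDpos)
  rw [hN, mul_div_assoc, div_self (ne_of_gt hDpos), mul_one] at this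
  simpa only [key, Pi.div_def] using this

/-- The pseudolikelihood score function tends to
∑ₛ (U_s(x_s) − min_ℓ U_s(ℓ)) as β → −∞. -/
theorem score_tendsto_atBot {S L : Type*} [Fintype S] [Nonempty S] [Fintype L] [Nonempty L]
    (U : S → L → ℝ) (x : S → L) (w : S → L → ℝ) (hw : ∀ s ℓ, 0 < w s ℓ) :
    Filter.Tendsto
      (fun β : ℝ => ∑ s, (U s (x s) -
        (∑ ℓ, w s ℓ * U s ℓ * Real.exp (β * U s ℓ)) /
          (∑ ℓ, w s ℓ * Real.exp (β * U s ℓ))))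
      Filter.atBot
      (nhds (∑ s, (U s (x s) - Finset.univ.inf' Finset.univ_nonempty (U s)))) := by
  refine tendsto_finset_sum _ fun s _ => ?_
  exact tendsto_const_nhds.sub (ratio_tendsto_aux (U s) (w s) (hw s))
end

section
/- Let S and L be nonempty finite types, U : S → L → ℝ, x : S → L, and w : S → L → ℝ with w(s)(ℓ) > 0 for all s, ℓ. Define f(β) = ∑_{s ∈ S} [U(s)(x(s)) − (∑_{ℓ} w(s)(ℓ)·U(s)(ℓ)·exp(β·U(s)(ℓ))) / (∑_{ℓ} w(s)(ℓ)·exp(β·U(s)(ℓ)))]. Then f(β) tends to ∑_{s ∈ S} (U(s)(x(s)) − max_{ℓ ∈ L} U(s)(ℓ)) as β → +∞. -/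
open Filter Real Finset

lemma softmax_tendsto_sup {L : Type*} [Fintype L] [Nonempty L]
    (a g : L → ℝ) (ha : ∀ ℓ, 0 < a ℓ) :
    Tendsto (fun β : ℝ => (∑ ℓ, a ℓ * g ℓ * Real.exp (β * g ℓ)) /
        (∑ ℓ, a ℓ * Real.exp (β * g ℓ))) atTop
      (nhds (Finset.univ.sup' Finset.univ_nonempty g)) := by
  set M := Finset.univ.sup' Finset.univ_nonempty g with hM
  set c : L → ℝ := fun ℓ => if g ℓ = M then 1 else 0 with hc
  have hexp : ∀ ℓ, Tendsto (fun β : ℝ => Real.exp (β * (g ℓ - M))) atTop (nhds (c ℓ)) := by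
    intro ℓ
    by_cases h : g ℓ = M
    · simp [hc, h]
    · have hlt : g ℓ - M < 0 := by
        have h1 := Finset.le_sup' g (Finset.mem_univ ℓ)
        have : g ℓ < M := lt_of_le_of_ne h1 h
        linarith
      have h2 : Tendsto (fun β : ℝ => β * (g ℓ - M)) atTop atBot :=
        Tendsto.atTop_mul_const_of_neg hlt tendsto_id
      simpa [hc, h] using h2
  have hnum : Tendsto (fun β : ℝ => ∑ ℓ, a ℓ * g ℓ * Real.exp (β * (g ℓ - M))) atTop
      (nhds (∑ ℓ, a ℓ * g ℓ * c ℓ)) :=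
    tendsto_finset_sum _ fun ℓ _ => (hexp ℓ).const_mul _
  have hden : Tendsto (fun β : ℝ => ∑ ℓ, a ℓ * Real.exp (β * (g ℓ - M))) atTop
      (nhds (∑ ℓ, a ℓ * c ℓ)) :=
    tendsto_finset_sum _ fun ℓ _ => (hexp ℓ).const_mul _
  obtain ⟨ℓ₀, -, hℓ₀⟩ := Finset.exists_mem_eq_sup' Finset.univ_nonempty g
  have hdenpos : 0 < ∑ ℓ, a ℓ * c ℓ := by
    refine Finset.sum_pos' (fun ℓ _ => ?_) ⟨ℓ₀, Finset.mem_univ _, ?_⟩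
    · by_cases h : g ℓ = M
      · simp only [hc, h, if_pos, mul_one]; exact (ha ℓ).le
      · simp [hc, h]
    · simp only [hc, hℓ₀.symm, if_pos, mul_one]; simpa [← hM] using ha ℓ₀
  have hnumeq : (∑ ℓ, a ℓ * g ℓ * c ℓ) = M * ∑ ℓ, a ℓ * c ℓ := by
    rw [Finset.mul_sum]
    apply Finset.sum_congr rfl
    intro ℓ _
    by_cases h : g ℓ = M
    · simp [hc, h]; ring
    · simp [hc, h]
  have key : Tendsto (fun β : ℝ => (∑ ℓ, a ℓ * g ℓ * Real.exp (β * (g ℓ - M))) /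
      (∑ ℓ, a ℓ * Real.exp (β * (g ℓ - M)))) atTop (nhds M) := by
    have := hnum.div hden hdenpos.ne'
    rwa [hnumeq, mul_div_assoc, div_self hdenpos.ne', mul_one] at this
  refine key.congr fun β => ?_
  have h1 : ∀ ℓ, Real.exp (β * g ℓ) = Real.exp (β * M) * Real.exp (β * (g ℓ - M)) := by
    intro ℓ; rw [← Real.exp_add]; ring_nf
  have e := Real.exp_ne_zero (β * M)
  rw [show (∑ ℓ, a ℓ * g ℓ * Real.exp (β * g ℓ)) =
      Real.exp (β * M) * ∑ ℓ, a ℓ * g ℓ * Real.exp (β * (g ℓ - M)) by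
        rw [Finset.mul_sum]; exact Finset.sum_congr rfl fun ℓ _ => by rw [h1]; ring,
    show (∑ ℓ, a ℓ * Real.exp (β * g ℓ)) =
      Real.exp (β * M) * ∑ ℓ, a ℓ * Real.exp (β * (g ℓ - M)) by
        rw [Finset.mul_sum]; exact Finset.sum_congr rfl fun ℓ _ => by rw [h1]; ring,
    mul_div_mul_left _ _ e]

/-- The pseudolikelihood score function tends to
∑ₛ (U_s(x_s) − max_ℓ U_s(ℓ)) as β → +∞. -/
theorem score_tendsto_atTop {S L : Type*} [Fintype S] [Nonempty S] [Fintype L] [Nonempty L]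
    (U : S → L → ℝ) (x : S → L) (w : S → L → ℝ) (hw : ∀ s ℓ, 0 < w s ℓ) :
    Filter.Tendsto
      (fun β : ℝ => ∑ s, (U s (x s) -
        (∑ ℓ, w s ℓ * U s ℓ * Real.exp (β * U s ℓ)) /
          (∑ ℓ, w s ℓ * Real.exp (β * U s ℓ))))
      Filter.atTop
      (nhds (∑ s, (U s (x s) - Finset.univ.sup' Finset.univ_nonempty (U s)))) := by
  exact tendsto_finset_sum _ fun s _ =>
    Filter.Tendsto.const_sub _ (softmax_tendsto_sup (w s) (U s) (hw s))
end

section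
/- Let S and L be nonempty finite types, U : S → L → ℝ, x : S → L, and w : S → L → ℝ with w(s)(ℓ) > 0 for all s, ℓ. Define f(β) = ∑_{s ∈ S} [U(s)(x(s)) − (∑_{ℓ} w(s)(ℓ)·U(s)(ℓ)·exp(β·U(s)(ℓ))) / (∑_{ℓ} w(s)(ℓ)·exp(β·U(s)(ℓ)))]. If there exists a site s ∈ S such that U(s)(x(s)) > min_{ℓ ∈ L} U(s)(ℓ), then f is strictly decreasing (strictly antitone) on ℝ. -/
open Finset

private lemma key_pair (t : ℝ) (ht : 0 < t) (a b : ℝ) :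
    0 ≤ (a - b) * (Real.exp (t * a) - Real.exp (t * b)) := by
  rcases le_total a b with hab | hab
  · have := Real.exp_le_exp.mpr (mul_le_mul_of_nonneg_left hab ht.le)
    nlinarith
  · have := Real.exp_le_exp.mpr (mul_le_mul_of_nonneg_left hab ht.le)
    nlinarith

private lemma key_pair_pos (t : ℝ) (ht : 0 < t) (a b : ℝ) (hab : a ≠ b) :
    0 < (a - b) * (Real.exp (t * a) - Real.exp (t * b)) := by
  rcases lt_or_gt_of_ne hab with hab' | hab'
  · have := Real.exp_lt_exp.mpr (mul_lt_mul_of_pos_left hab' ht)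
    nlinarith
  · have := Real.exp_lt_exp.mpr (mul_lt_mul_of_pos_left hab' ht)
    nlinarith

section cross

variable {L : Type*} [Fintype L]

private lemma pair_sum_eq (β1 β2 : ℝ) (u : L → ℝ) (v : L → ℝ) (ℓ m : L) :
    (v ℓ * u ℓ * Real.exp (β2 * u ℓ) * (v m * Real.exp (β1 * u m)) -
      v ℓ * u ℓ * Real.exp (β1 * u ℓ) * (v m * Real.exp (β2 * u m))) +
    (v m * u m * Real.exp (β2 * u m) * (v ℓ * Real.exp (β1 * u ℓ)) -
      v m * u m * Real.exp (β1 * u m) * (v ℓ * Real.exp (β2 * u ℓ))) =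
    v ℓ * v m * Real.exp (β1 * u ℓ) * Real.exp (β1 * u m) *
      ((u ℓ - u m) * (Real.exp ((β2 - β1) * u ℓ) - Real.exp ((β2 - β1) * u m))) := by
  have e : ∀ c : ℝ, Real.exp (β2 * c) = Real.exp (β1 * c) * Real.exp ((β2 - β1) * c) := by
    intro c
    rw [← Real.exp_add]
    ring_nf
  rw [e (u ℓ), e (u m)]
  ring

/-- The key cross inequality. -/
private lemma cross_le (β1 β2 : ℝ) (hβ : β1 < β2) (u : L → ℝ) (v : L → ℝ)
    (hv : ∀ ℓ, 0 < v ℓ) :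
    (∑ ℓ, v ℓ * u ℓ * Real.exp (β1 * u ℓ)) * (∑ ℓ, v ℓ * Real.exp (β2 * u ℓ)) ≤
    (∑ ℓ, v ℓ * u ℓ * Real.exp (β2 * u ℓ)) * (∑ ℓ, v ℓ * Real.exp (β1 * u ℓ)) := by
  set F : L → L → ℝ := fun ℓ m =>
    v ℓ * u ℓ * Real.exp (β2 * u ℓ) * (v m * Real.exp (β1 * u m)) -
      v ℓ * u ℓ * Real.exp (β1 * u ℓ) * (v m * Real.exp (β2 * u m)) with hF
  have expand :
      (∑ ℓ, v ℓ * u ℓ * Real.exp (β2 * u ℓ)) * (∑ ℓ, v ℓ * Real.exp (β1 * u ℓ)) -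
      (∑ ℓ, v ℓ * u ℓ * Real.exp (β1 * u ℓ)) * (∑ ℓ, v ℓ * Real.exp (β2 * u ℓ)) =
      ∑ ℓ, ∑ m, F ℓ m := by
    rw [Finset.sum_mul_sum, Finset.sum_mul_sum, ← Finset.sum_sub_distrib]
    exact Finset.sum_congr rfl fun ℓ _ => by rw [← Finset.sum_sub_distrib]
  have comm : (∑ ℓ, ∑ m, F ℓ m) = ∑ ℓ, ∑ m, F m ℓ := Finset.sum_comm
  have twice : (∑ ℓ, ∑ m, F ℓ m) + (∑ ℓ, ∑ m, F ℓ m) = ∑ ℓ, ∑ m, (F ℓ m + F m ℓ) := by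
    nth_rewrite 1 [comm]
    rw [← Finset.sum_add_distrib]
    exact Finset.sum_congr rfl fun ℓ _ => by
      rw [← Finset.sum_add_distrib]
      exact Finset.sum_congr rfl fun m _ => by ring
  have nonneg : 0 ≤ ∑ ℓ, ∑ m, (F ℓ m + F m ℓ) := by
    apply Finset.sum_nonneg
    intro ℓ _
    apply Finset.sum_nonneg
    intro m _
    rw [hF]
    dsimp only
    rw [pair_sum_eq]
    apply mul_nonneg
    · have h1 := hv ℓ
      have h2 := hv m
      positivity
    · exact key_pair _ (by linarith) _ _
  linarith [expand, twice, nonneg]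

private lemma cross_lt (β1 β2 : ℝ) (hβ : β1 < β2) (u : L → ℝ) (v : L → ℝ)
    (hv : ∀ ℓ, 0 < v ℓ) (ℓ0 m0 : L) (hne : u ℓ0 ≠ u m0) :
    (∑ ℓ, v ℓ * u ℓ * Real.exp (β1 * u ℓ)) * (∑ ℓ, v ℓ * Real.exp (β2 * u ℓ)) <
    (∑ ℓ, v ℓ * u ℓ * Real.exp (β2 * u ℓ)) * (∑ ℓ, v ℓ * Real.exp (β1 * u ℓ)) := by
  set F : L → L → ℝ := fun ℓ m =>
    v ℓ * u ℓ * Real.exp (β2 * u ℓ) * (v m * Real.exp (β1 * u m)) -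
      v ℓ * u ℓ * Real.exp (β1 * u ℓ) * (v m * Real.exp (β2 * u m)) with hF
  have expand :
      (∑ ℓ, v ℓ * u ℓ * Real.exp (β2 * u ℓ)) * (∑ ℓ, v ℓ * Real.exp (β1 * u ℓ)) -
      (∑ ℓ, v ℓ * u ℓ * Real.exp (β1 * u ℓ)) * (∑ ℓ, v ℓ * Real.exp (β2 * u ℓ)) =
      ∑ ℓ, ∑ m, F ℓ m := by
    rw [Finset.sum_mul_sum, Finset.sum_mul_sum, ← Finset.sum_sub_distrib]
    exact Finset.sum_congr rfl fun ℓ _ => by rw [← Finset.sum_sub_distrib]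
  have comm : (∑ ℓ, ∑ m, F ℓ m) = ∑ ℓ, ∑ m, F m ℓ := Finset.sum_comm
  have twice : (∑ ℓ, ∑ m, F ℓ m) + (∑ ℓ, ∑ m, F ℓ m) = ∑ ℓ, ∑ m, (F ℓ m + F m ℓ) := by
    nth_rewrite 1 [comm]
    rw [← Finset.sum_add_distrib]
    exact Finset.sum_congr rfl fun ℓ _ => by
      rw [← Finset.sum_add_distrib]
      exact Finset.sum_congr rfl fun m _ => by ring
  have hterm : ∀ ℓ m : L, 0 ≤ F ℓ m + F m ℓ := by
    intro ℓ m
    rw [hF]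
    dsimp only
    rw [pair_sum_eq]
    apply mul_nonneg
    · have h1 := hv ℓ
      have h2 := hv m
      positivity
    · exact key_pair _ (by linarith) _ _
  have hpos0 : 0 < F ℓ0 m0 + F m0 ℓ0 := by
    rw [hF]
    dsimp only
    rw [pair_sum_eq]
    apply mul_pos
    · have h1 := hv ℓ0
      have h2 := hv m0
      positivity
    · exact key_pair_pos _ (by linarith) _ _ hne
  have pos : 0 < ∑ ℓ, ∑ m, (F ℓ m + F m ℓ) := by
    apply Finset.sum_pos' (fun ℓ _ => Finset.sum_nonneg fun m _ => hterm ℓ m)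
    exact ⟨ℓ0, Finset.mem_univ _,
      Finset.sum_pos' (fun m _ => hterm ℓ0 m) ⟨m0, Finset.mem_univ _, hpos0⟩⟩
  linarith [expand, twice, pos]

end cross

/-- If at some site the observed neighbor count exceeds the minimum possible one,
the pseudolikelihood score function is strictly decreasing in β. -/
theorem score_strictAnti {S L : Type*} [Fintype S] [Nonempty S] [Fintype L] [Nonempty L]
    (U : S → L → ℝ) (x : S → L) (w : S → L → ℝ) (hw : ∀ s ℓ, 0 < w s ℓ)
    (h : ∃ s : S, Finset.univ.inf' Finset.univ_nonempty (U s) < U s (x s)) :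
    StrictAnti (fun β : ℝ => ∑ s, (U s (x s) -
      (∑ ℓ, w s ℓ * U s ℓ * Real.exp (β * U s ℓ)) /
        (∑ ℓ, w s ℓ * Real.exp (β * U s ℓ)))) := by
  intro β1 β2 hβ
  obtain ⟨s0, hs0⟩ := h
  have hden : ∀ (s : S) (β : ℝ), 0 < ∑ ℓ, w s ℓ * Real.exp (β * U s ℓ) := by
    intro s β
    apply Finset.sum_pos (fun ℓ _ => mul_pos (hw s ℓ) (Real.exp_pos _)) Finset.univ_nonempty
  apply Finset.sum_lt_sum
  · intro s _
    apply sub_le_sub_left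
    rw [div_le_div_iff₀ (hden s β1) (hden s β2)]
    exact cross_le β1 β2 hβ (U s) (w s) (hw s)
  · refine ⟨s0, Finset.mem_univ _, ?_⟩
    apply sub_lt_sub_left
    rw [div_lt_div_iff₀ (hden s0 β1) (hden s0 β2)]
    obtain ⟨ℓ0, _, hℓ0⟩ := Finset.exists_mem_eq_inf' Finset.univ_nonempty (U s0)
    have hne : U s0 ℓ0 ≠ U s0 (x s0) := by rw [← hℓ0]; exact ne_of_lt hs0
    exact cross_lt β1 β2 hβ (U s0) (w s0) (hw s0) ℓ0 (x s0) hne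
end

section
/- (Existence and uniqueness of the prior pseudo-maximum-likelihood estimator.) Let S and L be nonempty finite types, U : S → L → ℝ, and x : S → L. Define f_prior(β) = ∑_{s ∈ S} [U(s)(x(s)) − (∑_{ℓ} U(s)(ℓ)·exp(β·U(s)(ℓ))) / (∑_{ℓ} exp(β·U(s)(ℓ)))]. If there exist sites s, t ∈ S with U(s)(x(s)) > min_{ℓ ∈ L} U(s)(ℓ) and U(t)(x(t)) < max_{ℓ ∈ L} U(t)(ℓ), then there exists a unique β ∈ ℝ such that f_prior(β) = 0. -/
open Finset Filter Topology

namespace FpriorAux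

variable {L : Type*} [Fintype L] [Nonempty L]

lemma Zpos (a : L → ℝ) (β : ℝ) : 0 < ∑ ℓ, Real.exp (β * a ℓ) :=
  Finset.sum_pos (fun ℓ _ => Real.exp_pos _) Finset.univ_nonempty

lemma key_identity (a : L → ℝ) (β1 β2 : ℝ) :
    2 * ((∑ ℓ, a ℓ * Real.exp (β2 * a ℓ)) * (∑ ℓ, Real.exp (β1 * a ℓ)) -
      (∑ ℓ, a ℓ * Real.exp (β1 * a ℓ)) * (∑ ℓ, Real.exp (β2 * a ℓ))) =
    ∑ i, ∑ j, (a i - a j) *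
      (Real.exp (β2 * a i + β1 * a j) - Real.exp (β1 * a i + β2 * a j)) := by
  have h1 : (∑ ℓ, a ℓ * Real.exp (β2 * a ℓ)) * (∑ ℓ, Real.exp (β1 * a ℓ))
      = ∑ i, ∑ j, a i * Real.exp (β2 * a i + β1 * a j) := by
    rw [Finset.sum_mul_sum]
    refine Finset.sum_congr rfl fun i _ => Finset.sum_congr rfl fun j _ => ?_
    rw [Real.exp_add]; ring
  have h2 : (∑ ℓ, a ℓ * Real.exp (β1 * a ℓ)) * (∑ ℓ, Real.exp (β2 * a ℓ))
      = ∑ i, ∑ j, a i * Real.exp (β1 * a i + β2 * a j) := by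
    rw [Finset.sum_mul_sum]
    refine Finset.sum_congr rfl fun i _ => Finset.sum_congr rfl fun j _ => ?_
    rw [Real.exp_add]; ring
  have hswap : ∀ F : L → L → ℝ, ∑ i, ∑ j, F i j = ∑ i, ∑ j, F j i := fun F =>
    Finset.sum_comm
  rw [h1, h2]
  have h3 : (∑ i, ∑ j, a i * Real.exp (β2 * a i + β1 * a j))
      = ∑ i, ∑ j, a j * Real.exp (β2 * a j + β1 * a i) := hswap _
  have h4 : (∑ i, ∑ j, a i * Real.exp (β1 * a i + β2 * a j))
      = ∑ i, ∑ j, a j * Real.exp (β1 * a j + β2 * a i) := hswap _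
  calc 2 * ((∑ i, ∑ j, a i * Real.exp (β2 * a i + β1 * a j)) -
        ∑ i, ∑ j, a i * Real.exp (β1 * a i + β2 * a j))
      = ((∑ i, ∑ j, a i * Real.exp (β2 * a i + β1 * a j)) +
          ∑ i, ∑ j, a j * Real.exp (β2 * a j + β1 * a i)) -
        ((∑ i, ∑ j, a i * Real.exp (β1 * a i + β2 * a j)) +
          ∑ i, ∑ j, a j * Real.exp (β1 * a j + β2 * a i)) := by
        rw [← h3, ← h4]; ring
    _ = ∑ i, ∑ j, (a i - a j) *
          (Real.exp (β2 * a i + β1 * a j) - Real.exp (β1 * a i + β2 * a j)) := by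
        rw [← Finset.sum_add_distrib, ← Finset.sum_add_distrib, ← Finset.sum_sub_distrib]
        refine Finset.sum_congr rfl fun i _ => ?_
        rw [← Finset.sum_add_distrib, ← Finset.sum_add_distrib, ← Finset.sum_sub_distrib]
        refine Finset.sum_congr rfl fun j _ => ?_
        rw [add_comm (β2 * a j) (β1 * a i), add_comm (β1 * a j) (β2 * a i)]
        ring

lemma pt_nonneg {β1 β2 : ℝ} (h : β1 ≤ β2) (x y : ℝ) :
    0 ≤ (x - y) * (Real.exp (β2 * x + β1 * y) - Real.exp (β1 * x + β2 * y)) := by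
  rcases le_total x y with hxy | hxy
  · have h2 : Real.exp (β2 * x + β1 * y) ≤ Real.exp (β1 * x + β2 * y) :=
      Real.exp_le_exp.2 (by nlinarith)
    nlinarith
  · have h2 : Real.exp (β1 * x + β2 * y) ≤ Real.exp (β2 * x + β1 * y) :=
      Real.exp_le_exp.2 (by nlinarith)
    nlinarith

lemma pt_pos {β1 β2 : ℝ} (h : β1 < β2) {x y : ℝ} (hxy : x ≠ y) :
    0 < (x - y) * (Real.exp (β2 * x + β1 * y) - Real.exp (β1 * x + β2 * y)) := by
  rcases lt_or_gt_of_ne hxy with hxy | hxy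
  · have h2 : Real.exp (β2 * x + β1 * y) < Real.exp (β1 * x + β2 * y) :=
      Real.exp_lt_exp.2 (by nlinarith)
    nlinarith
  · have h2 : Real.exp (β1 * x + β2 * y) < Real.exp (β2 * x + β1 * y) :=
      Real.exp_lt_exp.2 (by nlinarith)
    nlinarith

lemma g_mono (a : L → ℝ) {β1 β2 : ℝ} (h : β1 ≤ β2) :
    (∑ ℓ, a ℓ * Real.exp (β1 * a ℓ)) / (∑ ℓ, Real.exp (β1 * a ℓ)) ≤
    (∑ ℓ, a ℓ * Real.exp (β2 * a ℓ)) / (∑ ℓ, Real.exp (β2 * a ℓ)) := by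
  rw [div_le_div_iff₀ (Zpos a β1) (Zpos a β2)]
  have hk := key_identity a β1 β2
  have hnn : 0 ≤ ∑ i, ∑ j, (a i - a j) *
      (Real.exp (β2 * a i + β1 * a j) - Real.exp (β1 * a i + β2 * a j)) :=
    Finset.sum_nonneg fun i _ => Finset.sum_nonneg fun j _ => pt_nonneg h _ _
  nlinarith [hk, hnn]

lemma g_strict (a : L → ℝ) {β1 β2 : ℝ} (h : β1 < β2)
    (hne : ∃ i j : L, a i ≠ a j) :
    (∑ ℓ, a ℓ * Real.exp (β1 * a ℓ)) / (∑ ℓ, Real.exp (β1 * a ℓ)) <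
    (∑ ℓ, a ℓ * Real.exp (β2 * a ℓ)) / (∑ ℓ, Real.exp (β2 * a ℓ)) := by
  rw [div_lt_div_iff₀ (Zpos a β1) (Zpos a β2)]
  have hk := key_identity a β1 β2
  obtain ⟨i0, j0, hij⟩ := hne
  have hpos : 0 < ∑ i, ∑ j, (a i - a j) *
      (Real.exp (β2 * a i + β1 * a j) - Real.exp (β1 * a i + β2 * a j)) := by
    refine Finset.sum_pos' (fun i _ => Finset.sum_nonneg fun j _ => pt_nonneg h.le _ _)
      ⟨i0, Finset.mem_univ _, ?_⟩
    exact Finset.sum_pos' (fun j _ => pt_nonneg h.le _ _)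
      ⟨j0, Finset.mem_univ _, pt_pos h hij⟩
  nlinarith [hk, hpos]

lemma g_cont (a : L → ℝ) :
    Continuous (fun β : ℝ =>
      (∑ ℓ, a ℓ * Real.exp (β * a ℓ)) / (∑ ℓ, Real.exp (β * a ℓ))) := by
  have hce : ∀ c : ℝ, Continuous fun β : ℝ => Real.exp (β * c) := fun c =>
    Real.continuous_exp.comp (continuous_id.mul continuous_const)
  exact Continuous.div
    (continuous_finset_sum _ fun ℓ _ => continuous_const.mul (hce (a ℓ)))
    (continuous_finset_sum _ fun ℓ _ => hce (a ℓ))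
    (fun β => (Zpos a β).ne')

lemma tendsto_g_atTop (a : L → ℝ) :
    Tendsto (fun β : ℝ =>
      (∑ ℓ, a ℓ * Real.exp (β * a ℓ)) / (∑ ℓ, Real.exp (β * a ℓ))) atTop
      (𝓝 (Finset.univ.sup' Finset.univ_nonempty a)) := by
  set M := Finset.univ.sup' Finset.univ_nonempty a with hM
  set w : L → ℝ := fun ℓ => if a ℓ = M then 1 else 0 with hw
  have hrw : ∀ β : ℝ,
      (∑ ℓ, a ℓ * Real.exp (β * a ℓ)) / (∑ ℓ, Real.exp (β * a ℓ)) =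
      (∑ ℓ, a ℓ * Real.exp (β * (a ℓ - M))) / (∑ ℓ, Real.exp (β * (a ℓ - M))) := by
    intro β
    have hE : ∀ ℓ, Real.exp (β * a ℓ) = Real.exp (β * (a ℓ - M)) * Real.exp (β * M) := by
      intro ℓ; rw [← Real.exp_add]; ring_nf
    have hnum : (∑ ℓ, a ℓ * Real.exp (β * a ℓ)) =
        (∑ ℓ, a ℓ * Real.exp (β * (a ℓ - M))) * Real.exp (β * M) := by
      rw [Finset.sum_mul]
      exact Finset.sum_congr rfl fun ℓ _ => by rw [hE ℓ]; ring
    have hden : (∑ ℓ, Real.exp (β * a ℓ)) =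
        (∑ ℓ, Real.exp (β * (a ℓ - M))) * Real.exp (β * M) := by
      rw [Finset.sum_mul]
      exact Finset.sum_congr rfl fun ℓ _ => hE ℓ
    rw [hnum, hden, mul_div_mul_right _ _ (Real.exp_ne_zero _)]
  have hterm : ∀ ℓ, Tendsto (fun β : ℝ => Real.exp (β * (a ℓ - M))) atTop (𝓝 (w ℓ)) := by
    intro ℓ
    by_cases h : a ℓ = M
    · simp only [hw, h, if_pos, sub_self, mul_zero, Real.exp_zero]
      exact tendsto_const_nhds
    · have hlt : a ℓ < M := lt_of_le_of_ne (Finset.le_sup' a (Finset.mem_univ ℓ)) h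
      simp only [hw, if_neg h]
      refine Real.tendsto_exp_atBot.comp ?_
      exact Tendsto.atTop_mul_const_of_neg (by linarith) tendsto_id
  have hnum : Tendsto (fun β : ℝ => ∑ ℓ, a ℓ * Real.exp (β * (a ℓ - M))) atTop
      (𝓝 (∑ ℓ, a ℓ * w ℓ)) :=
    tendsto_finset_sum _ fun ℓ _ => (hterm ℓ).const_mul (a ℓ)
  have hden : Tendsto (fun β : ℝ => ∑ ℓ, Real.exp (β * (a ℓ - M))) atTop
      (𝓝 (∑ ℓ, w ℓ)) := tendsto_finset_sum _ fun ℓ _ => hterm ℓ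
  obtain ⟨ℓ0, _, hℓ0⟩ := Finset.exists_mem_eq_sup' Finset.univ_nonempty a
  have hWpos : 0 < ∑ ℓ, w ℓ := by
    refine Finset.sum_pos' (fun ℓ _ => by (have : (0:ℝ) ≤ w ℓ := by simp only [hw]; positivity); exact this)
      ⟨ℓ0, Finset.mem_univ _, ?_⟩
    simp [hw, hℓ0.symm, hM]
  have hval : (∑ ℓ, a ℓ * w ℓ) / (∑ ℓ, w ℓ) = M := by
    have : (∑ ℓ, a ℓ * w ℓ) = M * ∑ ℓ, w ℓ := by
      rw [Finset.mul_sum]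
      refine Finset.sum_congr rfl fun ℓ _ => ?_
      by_cases h : a ℓ = M <;> simp [hw, h]
    rw [this, mul_div_assoc, div_self hWpos.ne', mul_one]
  have := (hnum.div hden hWpos.ne')
  rw [hval] at this
  exact (funext hrw : _) ▸ this

lemma neg_sup'_neg (a : L → ℝ) :
    Finset.univ.sup' Finset.univ_nonempty (fun ℓ => -a ℓ) =
    -(Finset.univ.inf' Finset.univ_nonempty a) := by
  apply le_antisymm
  · refine Finset.sup'_le _ _ fun ℓ _ => ?_
    rw [neg_le_neg_iff]
    exact Finset.inf'_le a (Finset.mem_univ ℓ)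
  · rw [neg_le]
    refine Finset.le_inf' _ _ fun ℓ _ => ?_
    rw [neg_le]
    exact Finset.le_sup' (fun ℓ => -a ℓ) (Finset.mem_univ ℓ)

lemma tendsto_g_atBot (a : L → ℝ) :
    Tendsto (fun β : ℝ =>
      (∑ ℓ, a ℓ * Real.exp (β * a ℓ)) / (∑ ℓ, Real.exp (β * a ℓ))) atBot
      (𝓝 (Finset.univ.inf' Finset.univ_nonempty a)) := by
  have h1 := (tendsto_g_atTop (fun ℓ => -a ℓ)).comp tendsto_neg_atBot_atTop
  have h2 := h1.neg
  rw [neg_sup'_neg, neg_neg] at h2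
  convert h2 using 2 with β
  simp only [Function.comp]
  rw [← neg_div, ← Finset.sum_neg_distrib]
  congr 1
  · exact Finset.sum_congr rfl fun ℓ _ => by rw [neg_mul_neg]; ring
  · exact Finset.sum_congr rfl fun ℓ _ => by rw [neg_mul_neg]

end FpriorAux

/-- Existence and uniqueness of the prior pseudo-maximum-likelihood estimator. -/
theorem fprior_existsUnique_root
    {S L : Type*} [Fintype S] [Nonempty S] [Fintype L] [Nonempty L]
    (U : S → L → ℝ) (x : S → L)
    (hs : ∃ s : S, Finset.univ.inf' Finset.univ_nonempty (U s) < U s (x s))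
    (ht : ∃ t : S, U t (x t) < Finset.univ.sup' Finset.univ_nonempty (U t)) :
    ∃! β : ℝ, ∑ s, (U s (x s) -
      (∑ ℓ, U s ℓ * Real.exp (β * U s ℓ)) / (∑ ℓ, Real.exp (β * U s ℓ))) = 0 := by
  classical
  open FpriorAux in
  obtain ⟨s0, hs0⟩ := hs
  obtain ⟨t0, ht0⟩ := ht
  set f : ℝ → ℝ := fun β => ∑ s, (U s (x s) -
      (∑ ℓ, U s ℓ * Real.exp (β * U s ℓ)) / (∑ ℓ, Real.exp (β * U s ℓ))) with hf
  -- nonconstancy of U s0 and U t0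
  obtain ⟨ℓs, _, hℓs⟩ := Finset.exists_mem_eq_inf' (Finset.univ_nonempty (α := L)) (U s0)
  have hnc : ∃ i j : L, U s0 i ≠ U s0 j := ⟨x s0, ℓs, by rw [hℓs] at hs0; exact ne_of_gt hs0⟩
  -- strict antitonicity
  have hanti : StrictAnti f := by
    intro β1 β2 h
    refine Finset.sum_lt_sum (fun s _ => sub_le_sub_left (g_mono (U s) h.le) _)
      ⟨s0, Finset.mem_univ _, sub_lt_sub_left (g_strict (U s0) h hnc) _⟩
  -- continuity
  have hcont : Continuous f := continuous_finset_sum _ fun s _ =>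
    continuous_const.sub (g_cont (U s))
  -- positive value at -∞
  have hA : Tendsto f atBot
      (𝓝 (∑ s, (U s (x s) - Finset.univ.inf' Finset.univ_nonempty (U s)))) :=
    tendsto_finset_sum _ fun s _ => tendsto_const_nhds.sub (tendsto_g_atBot (U s))
  have hApos : 0 < ∑ s, (U s (x s) - Finset.univ.inf' Finset.univ_nonempty (U s)) :=
    Finset.sum_pos' (fun s _ => sub_nonneg.2 (Finset.inf'_le _ (Finset.mem_univ _)))
      ⟨s0, Finset.mem_univ _, sub_pos.2 hs0⟩
  obtain ⟨β1, hβ1⟩ := (hA.eventually (lt_mem_nhds hApos)).exists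
  -- negative value at +∞
  have hB : Tendsto f atTop
      (𝓝 (∑ s, (U s (x s) - Finset.univ.sup' Finset.univ_nonempty (U s)))) :=
    tendsto_finset_sum _ fun s _ => tendsto_const_nhds.sub (tendsto_g_atTop (U s))
  have hBneg : (∑ s, (U s (x s) - Finset.univ.sup' Finset.univ_nonempty (U s))) < 0 := by
    refine Finset.sum_neg' (fun s _ => sub_nonpos.2 (Finset.le_sup' _ (Finset.mem_univ _)))
      ⟨t0, Finset.mem_univ _, sub_neg.2 ht0⟩
  obtain ⟨β2, hβ2⟩ := (hB.eventually (gt_mem_nhds hBneg)).exists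
  -- IVT
  have h0 : (0 : ℝ) ∈ Set.uIcc (f β1) (f β2) :=
    Set.mem_uIcc.2 (Or.inr ⟨hβ2.le, hβ1.le⟩)
  obtain ⟨β, _, hβ⟩ := intermediate_value_uIcc hcont.continuousOn h0
  exact ⟨β, hβ, fun y hy => hanti.injective (hy.trans hβ.symm)⟩
end

section
/- (Existence and uniqueness of the posterior pseudo-maximum-likelihood estimator.) Let S and L be nonempty finite types, U : S → L → ℝ, x : S → L, and w : S → L → ℝ with w(s)(ℓ) > 0 for all s, ℓ. Define f_post(β) = ∑_{s ∈ S} [U(s)(x(s)) − (∑_{ℓ} w(s)(ℓ)·U(s)(ℓ)·exp(β·U(s)(ℓ))) / (∑_{ℓ} w(s)(ℓ)·exp(β·U(s)(ℓ)))]. If there exist sites s, t ∈ S with U(s)(x(s)) > min_{ℓ ∈ L} U(s)(ℓ) and U(t)(x(t)) < max_{ℓ ∈ L} U(t)(ℓ), then there exists a unique β ∈ ℝ such that f_post(β) = 0. -/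
open Finset Filter Real Topology
set_option linter.unusedSectionVars false

namespace FpostAux

variable {L : Type*} [Fintype L] [Nonempty L]

noncomputable def Bf (w u : L → ℝ) (β : ℝ) : ℝ := ∑ ℓ, w ℓ * Real.exp (β * u ℓ)
noncomputable def Af (w u : L → ℝ) (β : ℝ) : ℝ := ∑ ℓ, w ℓ * u ℓ * Real.exp (β * u ℓ)
noncomputable def Cf (w u : L → ℝ) (β : ℝ) : ℝ := ∑ ℓ, w ℓ * u ℓ * u ℓ * Real.exp (β * u ℓ)
noncomputable def mf (w u : L → ℝ) (β : ℝ) : ℝ := Af w u β / Bf w u β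

lemma Bf_pos (w u : L → ℝ) (hw : ∀ ℓ, 0 < w ℓ) (β : ℝ) : 0 < Bf w u β :=
  Finset.sum_pos (fun ℓ _ => mul_pos (hw ℓ) (Real.exp_pos _)) univ_nonempty

lemma hasDerivAt_exp_lin (c β : ℝ) :
    HasDerivAt (fun β : ℝ => Real.exp (β * c)) (c * Real.exp (β * c)) β := by
  simpa [mul_comm] using ((hasDerivAt_id β).mul_const c).exp

lemma hasDerivAt_Bf (w u : L → ℝ) (β : ℝ) : HasDerivAt (Bf w u) (Af w u β) β := by
  refine HasDerivAt.fun_sum fun ℓ _ => ?_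
  simpa [mul_assoc] using (hasDerivAt_exp_lin (u ℓ) β).const_mul (w ℓ)

lemma hasDerivAt_Af (w u : L → ℝ) (β : ℝ) : HasDerivAt (Af w u) (Cf w u β) β := by
  refine HasDerivAt.fun_sum fun ℓ _ => ?_
  have := (hasDerivAt_exp_lin (u ℓ) β).const_mul (w ℓ * u ℓ)
  convert this using 1
  rfl
  ring

lemma hasDerivAt_mf (w u : L → ℝ) (hw : ∀ ℓ, 0 < w ℓ) (β : ℝ) :
    HasDerivAt (mf w u)
      ((Cf w u β * Bf w u β - Af w u β * Af w u β) / Bf w u β ^ 2) β :=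
  (hasDerivAt_Af w u β).div (hasDerivAt_Bf w u β) (Bf_pos w u hw β).ne'

lemma var_eq (w u : L → ℝ) (β : ℝ) :
    2 * (Cf w u β * Bf w u β - Af w u β * Af w u β)
      = ∑ ℓ, ∑ ℓ', (w ℓ * Real.exp (β * u ℓ)) * (w ℓ' * Real.exp (β * u ℓ')) *
          (u ℓ - u ℓ') ^ 2 := by
  unfold Af Bf Cf
  have h1 : ∀ ℓ ℓ' : L, (w ℓ * Real.exp (β * u ℓ)) * (w ℓ' * Real.exp (β * u ℓ')) *
        (u ℓ - u ℓ') ^ 2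
      = (w ℓ * u ℓ * u ℓ * Real.exp (β * u ℓ)) * (w ℓ' * Real.exp (β * u ℓ'))
        - 2 * ((w ℓ * u ℓ * Real.exp (β * u ℓ)) * (w ℓ' * u ℓ' * Real.exp (β * u ℓ')))
        + (w ℓ * Real.exp (β * u ℓ)) * (w ℓ' * u ℓ' * u ℓ' * Real.exp (β * u ℓ')) :=
    fun ℓ ℓ' => by ring
  simp only [h1, Finset.sum_add_distrib, Finset.sum_sub_distrib, ← Finset.mul_sum,
    ← Finset.sum_mul, ← Finset.sum_mul_sum]
  ring

lemma var_nonneg (w u : L → ℝ) (hw : ∀ ℓ, 0 < w ℓ) (β : ℝ) :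
    0 ≤ Cf w u β * Bf w u β - Af w u β * Af w u β := by
  have h := var_eq w u β
  have hnn : (0:ℝ) ≤ ∑ ℓ, ∑ ℓ', (w ℓ * Real.exp (β * u ℓ)) * (w ℓ' * Real.exp (β * u ℓ')) *
      (u ℓ - u ℓ') ^ 2 :=
    Finset.sum_nonneg fun ℓ _ => Finset.sum_nonneg fun ℓ' _ =>
      mul_nonneg (mul_nonneg (mul_pos (hw ℓ) (Real.exp_pos _)).le
        (mul_pos (hw ℓ') (Real.exp_pos _)).le) (sq_nonneg _)
  linarith

lemma var_pos (w u : L → ℝ) (hw : ∀ ℓ, 0 < w ℓ) {ℓ1 ℓ2 : L} (hne : u ℓ1 ≠ u ℓ2) (β : ℝ) :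
    0 < Cf w u β * Bf w u β - Af w u β * Af w u β := by
  have h := var_eq w u β
  have hpos : (0:ℝ) < ∑ ℓ, ∑ ℓ', (w ℓ * Real.exp (β * u ℓ)) * (w ℓ' * Real.exp (β * u ℓ')) *
      (u ℓ - u ℓ') ^ 2 := by
    refine Finset.sum_pos' (fun ℓ _ => Finset.sum_nonneg fun ℓ' _ =>
      mul_nonneg (mul_nonneg (mul_pos (hw ℓ) (Real.exp_pos _)).le
        (mul_pos (hw ℓ') (Real.exp_pos _)).le) (sq_nonneg _)) ⟨ℓ1, mem_univ _, ?_⟩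
    refine Finset.sum_pos' (fun ℓ' _ =>
      mul_nonneg (mul_nonneg (mul_pos (hw ℓ1) (Real.exp_pos _)).le
        (mul_pos (hw ℓ') (Real.exp_pos _)).le) (sq_nonneg _)) ⟨ℓ2, mem_univ _, ?_⟩
    have : (0:ℝ) < (u ℓ1 - u ℓ2) ^ 2 := by
      have := sub_ne_zero.mpr hne
      positivity
    exact mul_pos (mul_pos (mul_pos (hw ℓ1) (Real.exp_pos _))
      (mul_pos (hw ℓ2) (Real.exp_pos _))) this
  linarith

lemma mf_mono (w u : L → ℝ) (hw : ∀ ℓ, 0 < w ℓ) : Monotone (mf w u) := by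
  refine monotone_of_deriv_nonneg
    (fun β => (hasDerivAt_mf w u hw β).differentiableAt) fun β => ?_
  rw [(hasDerivAt_mf w u hw β).deriv]
  exact div_nonneg (var_nonneg w u hw β) (sq_nonneg _)

lemma mf_strictMono (w u : L → ℝ) (hw : ∀ ℓ, 0 < w ℓ) {ℓ1 ℓ2 : L} (hne : u ℓ1 ≠ u ℓ2) :
    StrictMono (mf w u) := by
  refine strictMono_of_deriv_pos fun β => ?_
  rw [(hasDerivAt_mf w u hw β).deriv]
  exact div_pos (var_pos w u hw hne β) (pow_pos (Bf_pos w u hw β) 2)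

lemma mf_continuous (w u : L → ℝ) (hw : ∀ ℓ, 0 < w ℓ) : Continuous (mf w u) :=
  (Differentiable.continuous fun β => (hasDerivAt_mf w u hw β).differentiableAt)

lemma mf_shift (w u : L → ℝ) (c β : ℝ) :
    mf w u β = (∑ ℓ, w ℓ * u ℓ * Real.exp (β * (u ℓ - c))) /
      (∑ ℓ, w ℓ * Real.exp (β * (u ℓ - c))) := by
  have key : ∀ ℓ : L, Real.exp (β * u ℓ) = Real.exp (β * c) * Real.exp (β * (u ℓ - c)) := by
    intro ℓ; rw [← Real.exp_add]; congr 1; ring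
  have hA : Af w u β = Real.exp (β * c) * ∑ ℓ, w ℓ * u ℓ * Real.exp (β * (u ℓ - c)) := by
    unfold Af; rw [Finset.mul_sum]
    exact Finset.sum_congr rfl fun ℓ _ => by rw [key ℓ]; ring
  have hB : Bf w u β = Real.exp (β * c) * ∑ ℓ, w ℓ * Real.exp (β * (u ℓ - c)) := by
    unfold Bf; rw [Finset.mul_sum]
    exact Finset.sum_congr rfl fun ℓ _ => by rw [key ℓ]; ring
  rw [mf, hA, hB, mul_div_mul_left _ _ (Real.exp_ne_zero _)]

lemma tendsto_mf_atTop (w u : L → ℝ) (hw : ∀ ℓ, 0 < w ℓ) :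
    Tendsto (mf w u) atTop (𝓝 (univ.sup' univ_nonempty u)) := by
  set M := univ.sup' univ_nonempty u with hM
  set D : ℝ := ∑ ℓ, w ℓ * (if u ℓ = M then (1:ℝ) else 0) with hD
  have hnum : Tendsto (fun β => ∑ ℓ, w ℓ * u ℓ * Real.exp (β * (u ℓ - M))) atTop
      (𝓝 (∑ ℓ, w ℓ * u ℓ * (if u ℓ = M then (1:ℝ) else 0))) := by
    refine tendsto_finset_sum _ fun ℓ _ => ?_
    by_cases h : u ℓ = M
    · simp [h]
    · have hlt : u ℓ < M := lt_of_le_of_ne (Finset.le_sup' u (mem_univ ℓ)) h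
      have h1 : Tendsto (fun β : ℝ => β * (u ℓ - M)) atTop atBot :=
        Tendsto.atTop_mul_const_of_neg (by linarith) tendsto_id
      have h2 := Real.tendsto_exp_atBot.comp h1
      simpa [h, Function.comp] using h2.const_mul (w ℓ * u ℓ)
  have hden : Tendsto (fun β => ∑ ℓ, w ℓ * Real.exp (β * (u ℓ - M))) atTop (𝓝 D) := by
    refine tendsto_finset_sum _ fun ℓ _ => ?_
    by_cases h : u ℓ = M
    · simp [h]
    · have hlt : u ℓ < M := lt_of_le_of_ne (Finset.le_sup' u (mem_univ ℓ)) h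
      have h1 : Tendsto (fun β : ℝ => β * (u ℓ - M)) atTop atBot :=
        Tendsto.atTop_mul_const_of_neg (by linarith) tendsto_id
      have h2 := Real.tendsto_exp_atBot.comp h1
      simpa [h, Function.comp] using h2.const_mul (w ℓ)
  have hDpos : 0 < D := by
    obtain ⟨ℓ0, -, hℓ0⟩ := Finset.exists_mem_eq_sup' (univ_nonempty) u
    refine Finset.sum_pos' (fun ℓ _ => mul_nonneg (hw ℓ).le (by positivity)) ⟨ℓ0, mem_univ _, ?_⟩
    simp [hℓ0.symm, hw ℓ0, hM]
  have hNeq : (∑ ℓ, w ℓ * u ℓ * (if u ℓ = M then (1:ℝ) else 0)) = M * D := by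
    rw [hD, Finset.mul_sum]
    refine Finset.sum_congr rfl fun ℓ _ => ?_
    by_cases h : u ℓ = M
    · simp [h]; ring
    · simp [h]
  have hlim := hnum.div hden hDpos.ne'
  rw [hNeq, mul_div_assoc, div_self hDpos.ne', mul_one] at hlim
  exact hlim.congr fun β => (mf_shift w u M β).symm

lemma tendsto_mf_atBot (w u : L → ℝ) (hw : ∀ ℓ, 0 < w ℓ) :
    Tendsto (mf w u) atBot (𝓝 (univ.inf' univ_nonempty u)) := by
  set M := univ.inf' univ_nonempty u with hM
  set D : ℝ := ∑ ℓ, w ℓ * (if u ℓ = M then (1:ℝ) else 0) with hD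
  have hnum : Tendsto (fun β => ∑ ℓ, w ℓ * u ℓ * Real.exp (β * (u ℓ - M))) atBot
      (𝓝 (∑ ℓ, w ℓ * u ℓ * (if u ℓ = M then (1:ℝ) else 0))) := by
    refine tendsto_finset_sum _ fun ℓ _ => ?_
    by_cases h : u ℓ = M
    · simp [h]
    · have hlt : M < u ℓ := lt_of_le_of_ne (Finset.inf'_le u (mem_univ ℓ)) (Ne.symm h)
      have h1 : Tendsto (fun β : ℝ => β * (u ℓ - M)) atBot atBot :=
        Tendsto.atBot_mul_const (by linarith) tendsto_id
      have h2 := Real.tendsto_exp_atBot.comp h1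
      simpa [h, Function.comp] using h2.const_mul (w ℓ * u ℓ)
  have hden : Tendsto (fun β => ∑ ℓ, w ℓ * Real.exp (β * (u ℓ - M))) atBot (𝓝 D) := by
    refine tendsto_finset_sum _ fun ℓ _ => ?_
    by_cases h : u ℓ = M
    · simp [h]
    · have hlt : M < u ℓ := lt_of_le_of_ne (Finset.inf'_le u (mem_univ ℓ)) (Ne.symm h)
      have h1 : Tendsto (fun β : ℝ => β * (u ℓ - M)) atBot atBot :=
        Tendsto.atBot_mul_const (by linarith) tendsto_id
      have h2 := Real.tendsto_exp_atBot.comp h1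
      simpa [h, Function.comp] using h2.const_mul (w ℓ)
  have hDpos : 0 < D := by
    obtain ⟨ℓ0, -, hℓ0⟩ := Finset.exists_mem_eq_inf' (univ_nonempty) u
    refine Finset.sum_pos' (fun ℓ _ => mul_nonneg (hw ℓ).le (by positivity)) ⟨ℓ0, mem_univ _, ?_⟩
    simp [hℓ0.symm, hw ℓ0, hM]
  have hNeq : (∑ ℓ, w ℓ * u ℓ * (if u ℓ = M then (1:ℝ) else 0)) = M * D := by
    rw [hD, Finset.mul_sum]
    refine Finset.sum_congr rfl fun ℓ _ => ?_
    by_cases h : u ℓ = M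
    · simp [h]; ring
    · simp [h]
  have hlim := hnum.div hden hDpos.ne'
  rw [hNeq, mul_div_assoc, div_self hDpos.ne', mul_one] at hlim
  exact hlim.congr fun β => (mf_shift w u M β).symm

end FpostAux

open FpostAux in
/-- Existence and uniqueness of the posterior pseudo-maximum-likelihood estimator. -/
theorem fpost_existsUnique_root
    {S L : Type*} [Fintype S] [Nonempty S] [Fintype L] [Nonempty L]
    (U : S → L → ℝ) (x : S → L) (w : S → L → ℝ) (hw : ∀ s ℓ, 0 < w s ℓ)
    (hs : ∃ s : S, Finset.univ.inf' Finset.univ_nonempty (U s) < U s (x s))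
    (ht : ∃ t : S, U t (x t) < Finset.univ.sup' Finset.univ_nonempty (U t)) :
    ∃! β : ℝ, ∑ s, (U s (x s) -
      (∑ ℓ, w s ℓ * U s ℓ * Real.exp (β * U s ℓ)) /
        (∑ ℓ, w s ℓ * Real.exp (β * U s ℓ))) = 0 := by
  classical
  obtain ⟨s0, hs0⟩ := hs
  obtain ⟨t0, ht0⟩ := ht
  let F : ℝ → ℝ := fun β => ∑ s, (U s (x s) - mf (w s) (U s) β)
  show ∃! β : ℝ, F β = 0
  obtain ⟨ℓ1, -, hℓ1⟩ := Finset.exists_mem_eq_inf' (Finset.univ_nonempty) (U s0)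
  have hne : U s0 ℓ1 ≠ U s0 (x s0) := ne_of_lt (hℓ1 ▸ hs0)
  have hstrict : StrictMono (mf (w s0) (U s0)) := mf_strictMono _ _ (hw s0) hne
  have hFanti : StrictAnti F := by
    intro β1 β2 hlt
    have h : ∑ s, mf (w s) (U s) β1 < ∑ s, mf (w s) (U s) β2 :=
      Finset.sum_lt_sum (fun s _ => mf_mono _ _ (hw s) hlt.le)
        ⟨s0, mem_univ _, hstrict hlt⟩
    simp only [F, Finset.sum_sub_distrib]
    linarith
  have hcont : Continuous F :=
    continuous_finset_sum _ fun s _ => continuous_const.sub (mf_continuous _ _ (hw s))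
  have htop : Tendsto F atTop
      (𝓝 (∑ s, (U s (x s) - Finset.univ.sup' Finset.univ_nonempty (U s)))) :=
    tendsto_finset_sum _ fun s _ => tendsto_const_nhds.sub (tendsto_mf_atTop _ _ (hw s))
  have hbot : Tendsto F atBot
      (𝓝 (∑ s, (U s (x s) - Finset.univ.inf' Finset.univ_nonempty (U s)))) :=
    tendsto_finset_sum _ fun s _ => tendsto_const_nhds.sub (tendsto_mf_atBot _ _ (hw s))
  have htopneg : (∑ s, (U s (x s) - Finset.univ.sup' Finset.univ_nonempty (U s))) < 0 := by
    have h := Finset.sum_lt_sum (s := (univ : Finset S))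
      (g := fun _ : S => (0:ℝ))
      (fun s _ => sub_nonpos.mpr (Finset.le_sup' (U s) (mem_univ (x s))))
      ⟨t0, mem_univ _, by exact sub_neg.mpr ht0⟩
    simpa using h
  have hbotpos : 0 < (∑ s, (U s (x s) - Finset.univ.inf' Finset.univ_nonempty (U s))) := by
    have h := Finset.sum_lt_sum (s := (univ : Finset S))
      (f := fun _ : S => (0:ℝ))
      (fun s _ => sub_nonneg.mpr (Finset.inf'_le (U s) (mem_univ (x s))))
      ⟨s0, mem_univ _, by exact sub_pos.mpr hs0⟩
    simpa using h
  obtain ⟨β2, hβ2⟩ := (htop.eventually_lt_const htopneg).exists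
  obtain ⟨β1, hβ1⟩ := (hbot.eventually_const_lt hbotpos).exists
  have hb12 : β1 < β2 := by
    by_contra h
    push_neg at h
    have := hFanti.antitone h
    linarith
  have h0mem : (0:ℝ) ∈ Set.Icc (F β2) (F β1) := ⟨hβ2.le, hβ1.le⟩
  obtain ⟨β0, -, hβ0⟩ := intermediate_value_Icc' hb12.le hcont.continuousOn h0mem
  exact ⟨β0, hβ0, fun y hy => hFanti.injective (hy.trans hβ0.symm)⟩
end
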